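/- The map Φ[0,1,1] : M₃(ℂ) → M₃(ℂ), X ↦ (1/2)·(D(X) - X^T adjusted as in the definition), i.e., Φ[0,1,1](X)_{ii} = (x_{jj} + x_{kk})/2 for {i,j,k}={1,2,3} and Φ[0,1,1](X)_{ij} = -x_{ij}/2 for i≠j, is a positive map: it maps positive semidefinite matrices to positive semidefinite matrices. -/

import Mathlib

open ComplexOrder

/-- The map Φ[0,1,1] on M₃(ℂ). -/
noncomputable def Phi011 (X : Matrix (Fin 3) (Fin 3) ℂ) : Matrix (Fin 3) (Fin 3) ℂ :=
  Matrix.of fun i j =>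
    if i = j then (X (i + 1) (i + 1) + X (i + 2) (i + 2)) / 2
    else -X i j / 2

private lemma smul_psd {n : Type*} [Fintype n] {M : Matrix n n ℂ} (hM : M.PosSemidef)
    {c : ℝ} (hc : 0 ≤ c) : ((c : ℂ) • M).PosSemidef := by
  refine Matrix.posSemidef_iff_dotProduct_mulVec.mpr ⟨?_, ?_⟩
  · unfold Matrix.IsHermitian
    rw [Matrix.conjTranspose_smul, hM.1]
    simp
  · intro x
    rw [Matrix.smul_mulVec, dotProduct_smul]
    exact mul_nonneg (by exact_mod_cast hc) ((Matrix.posSemidef_iff_dotProduct_mulVec.mp hM).2 x)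

private lemma trace_sub_psd (X : Matrix (Fin 3) (Fin 3) ℂ) (hX : X.PosSemidef) :
    (X.trace • (1 : Matrix (Fin 3) (Fin 3) ℂ) - X).PosSemidef := by
  classical
  have hH := hX.isHermitian
  have hspec := hH.spectral_theorem
  rw [Unitary.conjStarAlgAut_apply] at hspec
  have hUU : star (hH.eigenvectorUnitary : Matrix (Fin 3) (Fin 3) ℂ)
      * (hH.eigenvectorUnitary : Matrix (Fin 3) (Fin 3) ℂ) = 1 :=
    Matrix.mem_unitaryGroup_iff'.mp hH.eigenvectorUnitary.2
  have hUU' : (hH.eigenvectorUnitary : Matrix (Fin 3) (Fin 3) ℂ)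
      * star (hH.eigenvectorUnitary : Matrix (Fin 3) (Fin 3) ℂ) = 1 :=
    Matrix.mem_unitaryGroup_iff.mp hH.eigenvectorUnitary.2
  have htr : X.trace = Matrix.trace (Matrix.diagonal (RCLike.ofReal ∘ hH.eigenvalues)) := by
    conv_lhs => rw [hspec]
    rw [Matrix.trace_mul_cycle, hUU, one_mul]
  have key : X.trace • (1 : Matrix (Fin 3) (Fin 3) ℂ) - X
      = (hH.eigenvectorUnitary : Matrix (Fin 3) (Fin 3) ℂ)
          * (X.trace • (1 : Matrix (Fin 3) (Fin 3) ℂ)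
          - Matrix.diagonal (RCLike.ofReal ∘ hH.eigenvalues))
          * star (hH.eigenvectorUnitary : Matrix (Fin 3) (Fin 3) ℂ) := by
    rw [Matrix.mul_sub, Matrix.sub_mul, Matrix.mul_smul, mul_one, Matrix.smul_mul, hUU',
      ← hspec]
  rw [key]
  have hdiag : (X.trace • (1 : Matrix (Fin 3) (Fin 3) ℂ)
      - Matrix.diagonal (RCLike.ofReal ∘ hH.eigenvalues)).PosSemidef := by
    have heq : X.trace • (1 : Matrix (Fin 3) (Fin 3) ℂ)
        - Matrix.diagonal (RCLike.ofReal ∘ hH.eigenvalues)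
        = Matrix.diagonal (fun i => X.trace - (hH.eigenvalues i : ℂ)) := by
      ext i j
      by_cases h : i = j <;>
        simp [Matrix.diagonal, Matrix.one_apply, h]
    rw [heq]
    refine Matrix.PosSemidef.diagonal ?_
    rw [Pi.le_def]
    intro i
    simp only [Pi.zero_apply]
    rw [htr, Matrix.trace_diagonal, sub_nonneg]
    calc ((hH.eigenvalues i : ℝ) : ℂ) ≤ ((∑ j, hH.eigenvalues j : ℝ) : ℂ) := by
          rw [Complex.real_le_real]
          exact Finset.single_le_sum (fun j _ => hX.eigenvalues_nonneg j) (Finset.mem_univ i)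
      _ = ∑ j, (RCLike.ofReal ∘ hH.eigenvalues) j := by push_cast; simp
  exact hdiag.mul_mul_conjTranspose_same _

theorem stmt_13 (X : Matrix (Fin 3) (Fin 3) ℂ) (hX : X.PosSemidef) :
    (Phi011 X).PosSemidef := by
  have key : Phi011 X = ((1/2 : ℝ) : ℂ) • (X.trace • (1 : Matrix (Fin 3) (Fin 3) ℂ) - X) := by
    ext i j
    simp only [Phi011, Matrix.of_apply, Matrix.smul_apply, Matrix.sub_apply, Matrix.smul_apply,
      Matrix.one_apply, Matrix.trace, Matrix.diag]
    fin_cases i <;> fin_cases j <;>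
      simp [Fin.sum_univ_three] <;> ring
  rw [key]
  exact smul_psd (trace_sub_psd X hX) (by norm_num)
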